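/- (Riordan's recurrence for connected labelled graphs) Let C_k denote the number of connected labelled simple graphs on k vertices. Then for every p ≥ 2, C_p = Σ_{k=1}^{p-1} binom(p−2, k−1) · (2^k − 1) · C_k · C_{p−k}. -/

import Mathlib

open scoped Classical in
/-- `connectedLabelledGraphCount k` is the number of connected labelled simple graphs
on `k` vertices. -/
noncomputable def connectedLabelledGraphCount (k : ℕ) : ℕ :=
  Fintype.card {G : SimpleGraph (Fin k) // G.Connected}

open scoped Classical

open SimpleGraph Finset
set_option linter.unusedSectionVars false

variable {V : Type*} [Fintype V] [DecidableEq V]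

/-- vertices reachable from `a` avoiding `b`. -/
def sideA (G : SimpleGraph V) (a b : V) : Set V :=
  {x | ∃ w : G.Walk a x, b ∉ w.support}

section Side
variable {G : SimpleGraph V} {a b : V} (hab : a ≠ b)

lemma a_mem_sideA (hab : a ≠ b) : a ∈ sideA G a b :=
  ⟨Walk.nil, by simp [Ne.symm hab]⟩

lemma b_not_mem_sideA : b ∉ sideA G a b := by
  rintro ⟨w, hw⟩; exact hw w.end_mem_support

lemma sideA_adj {x y : V} (hx : x ∈ sideA G a b) (hxy : G.Adj x y) (hyb : y ≠ b) :
    y ∈ sideA G a b := by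
  obtain ⟨w, hw⟩ := hx
  refine ⟨w.concat hxy, ?_⟩
  simp only [Walk.support_concat, List.concat_eq_append, List.mem_append, List.mem_singleton]
  rintro (h | h)
  exacts [hw h, hyb h.symm]

/-- any walk from a sideA vertex avoiding b stays in sideA -/
lemma sideA_of_walk {x y : V} (hx : x ∈ sideA G a b) (w : G.Walk x y)
    (hw : b ∉ w.support) : y ∈ sideA G a b := by
  induction w with
  | nil => exact hx
  | cons h w ih =>
    rename_i u v z
    simp only [Walk.support_cons, List.mem_cons] at hw
    push_neg at hw
    exact ih (sideA_adj hx h (fun e => hw.2 (e ▸ w.start_mem_support))) hw.2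

lemma crossing_adj_eq_b {x y : V} (hx : x ∈ sideA G a b) (hy : y ∉ sideA G a b)
    (hxy : G.Adj x y) : y = b := by
  by_contra h; exact hy (sideA_adj hx hxy h)

lemma exists_adj_b_aux {x y : V} (w : G.Walk x y) :
    x ∈ sideA G a b → y = b → ∃ z ∈ sideA G a b, G.Adj z b := by
  induction w with
  | nil =>
    rintro hx rfl
    exact absurd hx b_not_mem_sideA
  | cons h p ih =>
    rename_i u v z
    intro hx hy
    by_cases hv : v = b
    · exact ⟨u, hx, hv ▸ h⟩
    · exact ih (sideA_adj hx h hv) hy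

/-- there is a neighbour of `b` inside sideA, provided `G` is connected. -/
lemma exists_adj_b (hab : a ≠ b) (hG : G.Connected) :
    ∃ x ∈ sideA G a b, G.Adj x b := by
  obtain ⟨w⟩ := hG.preconnected a b
  exact exists_adj_b_aux w (a_mem_sideA hab) rfl

lemma mem_sideA_of_mem_support (hab : a ≠ b) {x : V} {w : G.Walk a x}
    (hw : b ∉ w.support) {z : V} (hz : z ∈ w.support) : z ∈ sideA G a b := by
  refine sideA_of_walk (a_mem_sideA hab) (w.takeUntil z hz) fun hb => ?_
  exact hw (w.support_takeUntil_subset hz hb)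

lemma sideA_induce_connected (hab : a ≠ b) : (G.induce (sideA G a b)).Connected := by
  refine induce_connected_of_patches a (a_mem_sideA hab) ?_
  intro v hv
  obtain ⟨w, hw⟩ := hv
  refine ⟨{z | z ∈ w.support}, fun z hz => mem_sideA_of_mem_support hab hw hz,
    w.start_mem_support, w.end_mem_support, ?_⟩
  exact (w.connected_induce_support).preconnected _ _

lemma walk_to_b_aux (hab : a ≠ b) {x y : V} (w : G.Walk x y) :
    x ∉ sideA G a b → y = a → ∃ p : G.Walk x b, ∀ z ∈ p.support, z ∉ sideA G a b := by
  induction w with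
  | nil =>
    rintro hx rfl
    exact absurd (a_mem_sideA hab) hx
  | cons h p ih =>
    rename_i u v z
    intro hx hy
    by_cases hub : u = b
    · subst hub
      exact ⟨Walk.nil, by simpa using b_not_mem_sideA⟩
    · have hv : v ∉ sideA G a b := fun hv => hx (sideA_adj hv h.symm hub)
      obtain ⟨p', hp'⟩ := ih hv hy
      refine ⟨Walk.cons h p', ?_⟩
      simp only [Walk.support_cons, List.mem_cons]
      rintro z (rfl | hz)
      exacts [hx, hp' _ hz]

lemma compl_induce_connected (hab : a ≠ b) (hG : G.Connected) :
    (G.induce (sideA G a b)ᶜ).Connected := by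
  refine induce_connected_of_patches b b_not_mem_sideA ?_
  intro v hv
  obtain ⟨w⟩ := hG.preconnected v a
  obtain ⟨p, hp⟩ := walk_to_b_aux hab w hv rfl
  refine ⟨{z | z ∈ p.support}, fun z hz => hp z hz, p.end_mem_support,
    p.start_mem_support, ?_⟩
  exact (p.connected_induce_support).preconnected _ _

end Side
variable {V : Type*} [Fintype V] [DecidableEq V]

section Glue
variable (s : Set V) (b : V) (hb : b ∉ s)

/-- glue together a graph on `s`, a graph on `sᶜ`, and a set of neighbours of `b` in `s`. -/
def glue (C : SimpleGraph ↥s) (D : SimpleGraph ↥(sᶜ)) (A : Finset ↥s) : SimpleGraph V where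
  Adj x y := (∃ hx : x ∈ s, ∃ hy : y ∈ s, C.Adj ⟨x, hx⟩ ⟨y, hy⟩) ∨
    (∃ hx : x ∈ sᶜ, ∃ hy : y ∈ sᶜ, D.Adj ⟨x, hx⟩ ⟨y, hy⟩) ∨
    (y = b ∧ ∃ hx : x ∈ s, ⟨x, hx⟩ ∈ A) ∨ (x = b ∧ ∃ hy : y ∈ s, ⟨y, hy⟩ ∈ A)
  symm := by
    refine ⟨?_⟩
    rintro x y (⟨hx, hy, h⟩ | ⟨hx, hy, h⟩ | ⟨rfl, hx, h⟩ | ⟨rfl, hy, h⟩)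
    · exact Or.inl ⟨hy, hx, h.symm⟩
    · exact Or.inr (Or.inl ⟨hy, hx, h.symm⟩)
    · exact Or.inr (Or.inr (Or.inr ⟨rfl, hx, h⟩))
    · exact Or.inr (Or.inr (Or.inl ⟨rfl, hy, h⟩))
  loopless := by
    refine ⟨?_⟩
    rintro x (⟨hx, hy, h⟩ | ⟨hx, hy, h⟩ | ⟨rfl, hx, h⟩ | ⟨rfl, hy, h⟩)
    · exact C.loopless.irrefl _ h
    · exact D.loopless.irrefl _ h
    · exact hb hx
    · exact hb hy

variable {s b} {C : SimpleGraph ↥s} {D : SimpleGraph ↥(sᶜ)} {A : Finset ↥s}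

/-- inclusion of `C` into the glued graph -/
def homC : C →g glue s b hb C D A where
  toFun := Subtype.val
  map_rel' := fun {u v} h => Or.inl ⟨u.2, v.2, h⟩

/-- inclusion of `D` into the glued graph -/
def homD : D →g glue s b hb C D A where
  toFun := Subtype.val
  map_rel' := fun {u v} h => Or.inr (Or.inl ⟨u.2, v.2, h⟩)

lemma glue_connected (hbc : b ∈ sᶜ) (hC : C.Connected) (hD : D.Connected) (hA : A.Nonempty) :
    (glue s b hb C D A).Connected := by
  rw [connected_iff_exists_forall_reachable]
  obtain ⟨a₀, ha₀⟩ := hA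
  refine ⟨b, fun w => ?_⟩
  by_cases hw : w ∈ s
  · have h1 : (glue s b hb C D A).Reachable w a₀ :=
      (hC.preconnected ⟨w, hw⟩ a₀).map (homC hb)
    exact (h1.trans (Adj.reachable (Or.inr (Or.inr (Or.inl ⟨rfl, a₀.2, ha₀⟩))))).symm
  · have h1 : (glue s b hb C D A).Reachable w b :=
      (hD.preconnected ⟨w, hw⟩ ⟨b, hbc⟩).map (homD hb)
    exact h1.symm

lemma glue_walk_mem {x y : V} (w : (glue s b hb C D A).Walk x y) :
    x ∈ s → b ∉ w.support → y ∈ s := by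
  induction w with
  | nil => exact fun h _ => h
  | cons h p ih =>
    rename_i u v z
    intro hu hsup
    simp only [Walk.support_cons, List.mem_cons] at hsup
    push_neg at hsup
    have hvb : v ≠ b := fun e => hsup.2 (e ▸ p.start_mem_support)
    rcases h with ⟨hx, hy, _⟩ | ⟨hx, hy, _⟩ | ⟨rfl, _, _⟩ | ⟨rfl, _, _⟩
    · exact ih hy hsup.2
    · exact absurd hu hx
    · exact absurd rfl hvb
    · exact absurd hu hb
end Glue

section Recover
variable {s : Set V} {a b : V} {C : SimpleGraph ↥s} {D : SimpleGraph ↥(sᶜ)} {A : Finset ↥s}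

@[simp] lemma homC_apply (hb : b ∉ s) (x : ↥s) : (homC (C := C) (D := D) (A := A) hb) x = ↑x := rfl

lemma sideA_glue (hb : b ∉ s) (ha : a ∈ s) (hC : C.Connected) :
    sideA (glue s b hb C D A) a b = s := by
  apply Set.Subset.antisymm
  · rintro x ⟨w, hw⟩
    exact glue_walk_mem hb w ha hw
  · intro x hx
    obtain ⟨w⟩ := hC.preconnected ⟨a, ha⟩ ⟨x, hx⟩
    refine ⟨w.map (homC hb), fun hbs => ?_⟩
    have hbs : b ∈ (w.map (homC (C := C) (D := D) (A := A) hb)).support := hbs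
    rw [Walk.support_map, List.mem_map] at hbs
    obtain ⟨z, _, hz⟩ := hbs
    simp only [homC_apply] at hz
    exact hb (hz ▸ z.2)

lemma glue_induce_s (hb : b ∉ s) : (glue s b hb C D A).induce s = C := by
  ext ⟨x, hx⟩ ⟨y, hy⟩
  simp only [comap_adj, Function.Embedding.coe_subtype]
  constructor
  · rintro (⟨hx', hy', h⟩ | ⟨hx', _, _⟩ | ⟨he, _⟩ | ⟨he, _⟩)
    · exact h
    · exact absurd hx hx'
    · exact absurd (he ▸ hy) hb
    · exact absurd (he ▸ hx) hb
  · intro h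
    exact Or.inl ⟨hx, hy, h⟩

lemma glue_induce_compl (hb : b ∉ s) : (glue s b hb C D A).induce sᶜ = D := by
  ext ⟨x, hx⟩ ⟨y, hy⟩
  simp only [comap_adj, Function.Embedding.coe_subtype]
  constructor
  · rintro (⟨hx', _, _⟩ | ⟨hx', hy', h⟩ | ⟨he, hx', _⟩ | ⟨he, hy', _⟩)
    · exact absurd hx' hx
    · exact h
    · exact absurd hx' hx
    · exact absurd hy' hy
  · intro h
    exact Or.inr (Or.inl ⟨hx, hy, h⟩)

lemma glue_filter (hb : b ∉ s) :
    Finset.univ.filter (fun x : ↥s => (glue s b hb C D A).Adj ↑x b) = A := by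
  ext ⟨x, hx⟩
  simp only [mem_filter, mem_univ, true_and]
  constructor
  · rintro (⟨_, hbs, _⟩ | ⟨hxs, _, _⟩ | ⟨_, hx', hA⟩ | ⟨he, hbs, _⟩)
    · exact absurd hbs hb
    · exact absurd hx hxs
    · exact hA
    · exact absurd hbs hb
  · intro hA
    exact Or.inr (Or.inr (Or.inl ⟨rfl, hx, hA⟩))

lemma glue_recover {G : SimpleGraph V} (hbs : b ∉ s) (ha : a ∈ s)
    (h : sideA G a b = s) :
    glue s b hbs (G.induce s) (G.induce sᶜ)
      (Finset.univ.filter fun x : ↥s => G.Adj ↑x b) = G := by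
  ext x y
  constructor
  · rintro (⟨hx, hy, h'⟩ | ⟨hx, hy, h'⟩ | ⟨rfl, hx, hA⟩ | ⟨rfl, hy, hA⟩)
    · exact h'
    · exact h'
    · simp only [mem_filter] at hA
      exact hA.2
    · simp only [mem_filter] at hA
      exact hA.2.symm
  · intro hxy
    by_cases hx : x ∈ s <;> by_cases hy : y ∈ s
    · exact Or.inl ⟨hx, hy, hxy⟩
    · have hx' := hx; have hy' := hy
      rw [← h] at hx' hy'
      have hyb : y = b := crossing_adj_eq_b hx' hy' hxy
      subst hyb
      exact Or.inr (Or.inr (Or.inl ⟨rfl, hx, by simp [mem_filter, hxy]⟩))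
    · have hx' := hx; have hy' := hy
      rw [← h] at hx' hy'
      have hxb : x = b := crossing_adj_eq_b hy' hx' hxy.symm
      subst hxb
      exact Or.inr (Or.inr (Or.inr ⟨rfl, hy, by simp [mem_filter, hxy.symm]⟩))
    · exact Or.inr (Or.inl ⟨hx, hy, hxy⟩)

end Recover

section Count

lemma card_conn_congr {α β : Type*} [Fintype α] [Fintype β] (e : α ≃ β) :
    Fintype.card {G : SimpleGraph α // G.Connected} =
      Fintype.card {G : SimpleGraph β // G.Connected} := by
  apply Fintype.card_congr
  refine e.simpleGraph.subtypeEquiv fun G => ?_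
  exact (SimpleGraph.Iso.comap e.symm G).connected_iff.symm

noncomputable def connectedLabelledGraphCount' (k : ℕ) : ℕ :=
  Fintype.card {G : SimpleGraph (Fin k) // G.Connected}

lemma card_conn (α : Type*) [Fintype α] [inst : Fintype {G : SimpleGraph α // G.Connected}] :
    Fintype.card {G : SimpleGraph α // G.Connected} =
      connectedLabelledGraphCount' (Fintype.card α) := by
  rw [connectedLabelledGraphCount']
  apply Fintype.card_congr
  refine (Fintype.equivFin α).simpleGraph.subtypeEquiv fun G => ?_
  exact (SimpleGraph.Iso.comap (Fintype.equivFin α).symm G).connected_iff.symm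

lemma card_nonempty_finset (α : Type*) [Fintype α] [inst : Fintype {A : Finset α // A.Nonempty}] :
    Fintype.card {A : Finset α // A.Nonempty} = 2 ^ Fintype.card α - 1 := by
  calc Fintype.card {A : Finset α // A.Nonempty}
      = Fintype.card {A : Finset α // ¬A = ∅} :=
        Fintype.card_congr (Equiv.subtypeEquivRight fun A => by
          simp [Finset.nonempty_iff_ne_empty])
    _ = Fintype.card (Finset α) - Fintype.card {A : Finset α // A = ∅} :=
        Fintype.card_subtype_compl _
    _ = 2 ^ Fintype.card α - 1 := by
        rw [Fintype.card_finset, Fintype.card_subtype_eq]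

lemma induce_conn_of_fib {s : Set V} {a b : V} (hab : a ≠ b) {G : SimpleGraph V}
    (hfib : sideA G a b = s) : (G.induce s).Connected := by
  rw [← hfib]; exact sideA_induce_connected hab

lemma induce_compl_conn_of_fib {s : Set V} {a b : V} (hab : a ≠ b) {G : SimpleGraph V}
    (hG : G.Connected) (hfib : sideA G a b = s) : (G.induce sᶜ).Connected := by
  rw [← hfib]; exact compl_induce_connected hab hG

lemma filter_adj_nonempty {s : Set V} {a b : V} (hab : a ≠ b) {G : SimpleGraph V}
    (hG : G.Connected) (hfib : sideA G a b = s) :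
    (Finset.univ.filter fun x : ↥s => G.Adj ↑x b).Nonempty := by
  obtain ⟨x, hx, hadj⟩ := exists_adj_b hab hG
  rw [hfib] at hx
  exact ⟨⟨x, hx⟩, Finset.mem_filter.mpr ⟨Finset.mem_univ _, hadj⟩⟩

lemma fiber_card (a b : V) (s : Set V) (ha : a ∈ s) (hb : b ∉ s)
    [inst0 : Fintype {G : {G : SimpleGraph V // G.Connected} // sideA G.1 a b = s}]
    [instC : Fintype {C : SimpleGraph ↥s // C.Connected}]
    [instD : Fintype {D : SimpleGraph ↥(sᶜ) // D.Connected}]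
    [instA : Fintype {A : Finset ↥s // A.Nonempty}] :
    Fintype.card {G : {G : SimpleGraph V // G.Connected} // sideA G.1 a b = s} =
      Fintype.card {C : SimpleGraph ↥s // C.Connected} *
        Fintype.card {D : SimpleGraph ↥(sᶜ) // D.Connected} *
        Fintype.card {A : Finset ↥s // A.Nonempty} := by
  have hab : a ≠ b := fun e => hb (e ▸ ha)
  rw [← Fintype.card_prod, ← Fintype.card_prod]
  apply Fintype.card_congr
  refine
    { toFun := fun G =>
        ⟨⟨⟨G.1.1.induce s, induce_conn_of_fib hab G.2⟩,
          ⟨G.1.1.induce sᶜ, induce_compl_conn_of_fib hab G.1.2 G.2⟩⟩,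
         ⟨Finset.univ.filter fun x : ↥s => G.1.1.Adj ↑x b,
           filter_adj_nonempty hab G.1.2 G.2⟩⟩
      invFun := fun X =>
        ⟨⟨glue s b hb X.1.1.1 X.1.2.1 X.2.1,
          glue_connected hb hb X.1.1.2 X.1.2.2 X.2.2⟩, sideA_glue hb ha X.1.1.2⟩
      left_inv := ?_
      right_inv := ?_ }
  · rintro ⟨⟨G, hG⟩, hfib⟩
    exact Subtype.ext (Subtype.ext (glue_recover hb ha hfib))
  · rintro ⟨⟨⟨C, hC⟩, ⟨D, hD⟩⟩, ⟨A, hA⟩⟩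
    refine Prod.ext (Prod.ext (Subtype.ext ?_) (Subtype.ext ?_)) (Subtype.ext ?_)
    exacts [glue_induce_s hb, glue_induce_compl hb, glue_filter hb]

end Count




lemma count_sets (a b : V) (hab : a ≠ b) (k : ℕ) (hk : 1 ≤ k) :
    (Finset.univ.filter fun s : Set V =>
        (a ∈ s ∧ b ∉ s) ∧ Fintype.card ↥s = k).card =
      (Fintype.card V - 2).choose (k - 1) := by
  have hcard : ((univ.erase b).erase a).card = Fintype.card V - 2 := by
    rw [card_erase_of_mem (mem_erase.mpr ⟨hab, mem_univ a⟩), card_erase_of_mem (mem_univ b),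
      card_univ]
    omega
  rw [← hcard, ← Finset.card_powersetCard]
  refine Finset.card_bij' (fun (s : Set V) _ => s.toFinset.erase a)
    (fun F _ => (↑(insert a F) : Set V)) ?_ ?_ ?_ ?_
  · intro s hs
    simp only [mem_filter, mem_univ, true_and] at hs
    obtain ⟨⟨has, hbs⟩, hcards⟩ := hs
    rw [Finset.mem_powersetCard]
    constructor
    · intro z hz
      rw [Finset.mem_erase, Set.mem_toFinset] at hz
      refine mem_erase.mpr ⟨hz.1, mem_erase.mpr ⟨fun e => hbs (e ▸ hz.2), mem_univ z⟩⟩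
    · rw [card_erase_of_mem (Set.mem_toFinset.mpr has), Set.toFinset_card, hcards]
  · intro F hF
    rw [Finset.mem_powersetCard] at hF
    obtain ⟨hsub, hcardF⟩ := hF
    have haF : a ∉ F := fun h => (mem_erase.mp (hsub h)).1 rfl
    have hbF : b ∉ F := fun h => (mem_erase.mp (mem_erase.mp (hsub h)).2).1 rfl
    simp only [mem_filter, mem_univ, true_and]
    refine ⟨⟨by simp, by simp [hab.symm, hbF]⟩, ?_⟩
    rw [← Set.toFinset_card, Finset.toFinset_coe, card_insert_of_notMem haF, hcardF]
    omega
  · intro s hs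
    simp only [mem_filter, mem_univ, true_and] at hs
    show (↑(insert a (s.toFinset.erase a)) : Set V) = s
    rw [insert_erase (Set.mem_toFinset.mpr hs.1.1), Set.coe_toFinset]
  · intro F hF
    rw [Finset.mem_powersetCard] at hF
    have haF : a ∉ F := fun h => (mem_erase.mp (hF.1 h)).1 rfl
    ext z
    simp only [Finset.mem_erase, Set.mem_toFinset, Finset.coe_insert, Set.mem_insert_iff,
      Finset.mem_coe]
    constructor
    · rintro ⟨hne, (rfl | h)⟩
      · exact absurd rfl hne
      · exact h
    · intro h
      exact ⟨fun e => haF (e ▸ h), Or.inr h⟩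

set_option maxHeartbeats 3200000 in
theorem riordan_recurrence_connected_graphs (p : ℕ) (hp : 2 ≤ p) :
    connectedLabelledGraphCount p =
      ∑ k ∈ Finset.Icc 1 (p - 1),
        (p - 2).choose (k - 1) * (2 ^ k - 1) * connectedLabelledGraphCount k *
          connectedLabelledGraphCount (p - k) := by
  set a : Fin p := ⟨0, by omega⟩ with ha_def
  set b : Fin p := ⟨1, by omega⟩ with hb_def
  have hab : a ≠ b := by simp [ha_def, hb_def, Fin.ext_iff]
  have hq : connectedLabelledGraphCount' = connectedLabelledGraphCount :=
    funext fun k => Fintype.card_congr (Equiv.refl _)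
  rw [← hq]
  set t : Finset (Set (Fin p)) := Finset.univ.filter (fun s => a ∈ s ∧ b ∉ s) with ht
  -- partition into fibers
  have step1 : connectedLabelledGraphCount' p =
      ∑ s ∈ t, (Finset.univ.filter
        (fun G : {G : SimpleGraph (Fin p) // G.Connected} => sideA G.1 a b = s)).card := by
    rw [connectedLabelledGraphCount', ← Finset.card_univ]
    refine Finset.card_eq_sum_card_fiberwise (fun G _ => ?_)
    exact Finset.mem_filter.mpr ⟨Finset.mem_univ _,
      a_mem_sideA hab, b_not_mem_sideA⟩
  rw [step1]
  -- compute each fiber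
  have step2 : ∀ s ∈ t, (Finset.univ.filter
        (fun G : {G : SimpleGraph (Fin p) // G.Connected} => sideA G.1 a b = s)).card =
      connectedLabelledGraphCount' (Fintype.card ↥s) *
        connectedLabelledGraphCount' (p - Fintype.card ↥s) *
        (2 ^ Fintype.card ↥s - 1) := by
    intro s hs
    rw [ht, Finset.mem_filter] at hs
    obtain ⟨-, has, hbs⟩ := hs
    rw [← Fintype.card_subtype, fiber_card a b s has hbs, card_nonempty_finset,
      card_conn (↥s), card_conn (↥(sᶜ)), Fintype.card_compl_set, Fintype.card_fin]
  rw [Finset.sum_congr rfl step2]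
  -- group by cardinality
  have hmaps : ∀ s ∈ t, Fintype.card ↥s ∈ Finset.Icc 1 (p - 1) := by
    intro s hs
    rw [ht, Finset.mem_filter] at hs
    obtain ⟨-, has, hbs⟩ := hs
    have h1 : 0 < Fintype.card ↥s := Fintype.card_pos_iff.mpr ⟨⟨a, has⟩⟩
    have h2 : 0 < Fintype.card ↥(sᶜ) := Fintype.card_pos_iff.mpr ⟨⟨b, hbs⟩⟩
    have h3 : Fintype.card ↥(sᶜ) = Fintype.card (Fin p) - Fintype.card ↥s :=
      Fintype.card_compl_set s
    have h4 : Fintype.card ↥s ≤ Fintype.card (Fin p) :=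
      Fintype.card_le_of_embedding ⟨Subtype.val, Subtype.val_injective⟩
    rw [Fintype.card_fin] at h3 h4
    rw [Finset.mem_Icc]
    omega
  rw [← Finset.sum_fiberwise_of_maps_to hmaps
    (fun s : Set (Fin p) => connectedLabelledGraphCount' (Fintype.card ↥s) *
        connectedLabelledGraphCount' (p - Fintype.card ↥s) *
        (2 ^ Fintype.card ↥s - 1))]
  refine Finset.sum_congr rfl fun k hk => ?_
  rw [Finset.mem_Icc] at hk
  have inner : ∀ s ∈ t.filter (fun s : Set (Fin p) => Fintype.card ↥s = k),
      connectedLabelledGraphCount' (Fintype.card ↥s) *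
        connectedLabelledGraphCount' (p - Fintype.card ↥s) *
        (2 ^ Fintype.card ↥s - 1) =
      connectedLabelledGraphCount' k * connectedLabelledGraphCount' (p - k) * (2 ^ k - 1) := by
    intro s hs
    rw [(Finset.mem_filter.mp hs).2]
  rw [Finset.sum_congr rfl inner, Finset.sum_const, smul_eq_mul]
  have hcount : (t.filter (fun s : Set (Fin p) => Fintype.card ↥s = k)).card
      = (p - 2).choose (k - 1) := by
    rw [ht, Finset.filter_filter]
    have := count_sets a b hab k hk.1
    rw [Fintype.card_fin] at this
    exact this
  rw [hcount]
  ring
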